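/- Let d ≥ 1 and let a : (0, ∞) → (0, ∞) be continuous with ∫₀¹ dt/a(t) = ∞. Let γ : (0,1) → S^d be a differentiable curve into the unit sphere S^d ⊆ ℝ^{d+1} with ‖γ′(s)‖ < 1/a(s) for every s ∈ (0,1), where ‖·‖ is the Euclidean norm of ℝ^{d+1}. Then for every s₀ ∈ (0,1), every t̂ > 0 and every ω̂ ∈ S^d there exist s ∈ (0, min(s₀, t̂)) and a continuous, piecewise C¹ curve σ : [s, t̂] → S^d with σ(s) = γ(s), σ(t̂) = ω̂, and ‖σ′(τ)‖ < 1/a(τ) at every τ at which σ is differentiable. -/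

import Mathlib

open Filter MeasureTheory

open scoped ENNReal
open RealInnerProductSpace

section AuxFLRW
variable {E : Type*} [NormedAddCommGroup E] [InnerProductSpace ℝ E]

lemma aux_exists_s (a : ℝ → ℝ) (ha_pos : ∀ t > (0:ℝ), 0 < a t)
    (ha_cont : ContinuousOn a (Set.Ioi 0))
    (ha_noPH : ∫⁻ t in Set.Ioc (0:ℝ) 1, ENNReal.ofReal (1 / a t) = ⊤)
    (m : ℝ) (hm : 0 < m) (hm1 : m ≤ 1) :
    ∃ s ∈ Set.Ioo (0:ℝ) m, Real.pi < ∫ x in s..m, 1 / a x := by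
  have hIocm : ∫⁻ t in Set.Ioc (0:ℝ) m, ENNReal.ofReal (1 / a t) = ⊤ := by
    by_contra h
    have hcont : ContinuousOn a (Set.Icc m 1) :=
      ha_cont.mono (fun x hx => lt_of_lt_of_le hm hx.1)
    obtain ⟨ε, hε, hbd⟩ : ∃ ε > 0, ∀ x ∈ Set.Icc m 1, ε ≤ a x := by
      rcases Set.eq_empty_or_nonempty (Set.Icc m 1) with he | hne
      · exact ⟨1, one_pos, by simp [he]⟩
      · obtain ⟨x₀, hx₀, hmin⟩ := isCompact_Icc.exists_isMinOn hne hcont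
        exact ⟨a x₀, ha_pos _ (lt_of_lt_of_le hm hx₀.1), fun x hx => hmin hx⟩
    have hfin : ∫⁻ t in Set.Ioc m 1, ENNReal.ofReal (1 / a t) < ⊤ := by
      calc ∫⁻ t in Set.Ioc m 1, ENNReal.ofReal (1 / a t)
          ≤ ∫⁻ _ in Set.Ioc m 1, ENNReal.ofReal (1 / ε) := by
            refine setLIntegral_mono' measurableSet_Ioc (fun x hx => ?_)
            exact ENNReal.ofReal_le_ofReal
              (one_div_le_one_div_of_le hε (hbd x ⟨le_of_lt hx.1, hx.2⟩))
        _ = ENNReal.ofReal (1 / ε) * volume (Set.Ioc m 1) := by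
            simp [lintegral_const, Measure.restrict_apply]
        _ < ⊤ := ENNReal.mul_lt_top ENNReal.ofReal_lt_top (by simp [Real.volume_Ioc])
    have hsplit : Set.Ioc (0:ℝ) 1 = Set.Ioc 0 m ∪ Set.Ioc m 1 :=
      (Set.Ioc_union_Ioc_eq_Ioc (le_of_lt hm) hm1).symm
    have hle := lintegral_union_le (μ := volume) (fun t => ENNReal.ofReal (1 / a t))
      (Set.Ioc (0:ℝ) m) (Set.Ioc m 1)
    rw [← hsplit, ha_noPH] at hle
    exact (ENNReal.add_lt_top.2 ⟨lt_top_iff_ne_top.2 h, hfin⟩).ne (top_le_iff.1 hle)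
  set f : ℝ → ℝ≥0∞ := fun t => ENNReal.ofReal (1 / a t) with hfdef
  have hfa_cont : ContinuousOn f (Set.Ioi 0) := by
    apply ENNReal.continuous_ofReal.comp_continuousOn
    exact continuousOn_const.div ha_cont (fun x hx => (ha_pos x hx).ne')
  set s : ℕ → ℝ := fun n => m / (n + 2) with hsdef
  have hs_pos : ∀ n, 0 < s n := fun n => div_pos hm (by positivity)
  have hs_lt : ∀ n, s n < m := fun n => by
    rw [hsdef]
    rw [div_lt_iff₀ (by positivity)]
    nlinarith [hm]
  set g : ℕ → ℝ → ℝ≥0∞ := fun n => (Set.Ioc (s n) m).indicator f with hgdef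
  have hg_meas : ∀ n, AEMeasurable (g n) volume := by
    intro n
    rw [hgdef]
    rw [aemeasurable_indicator_iff measurableSet_Ioc]
    exact (hfa_cont.mono (fun x hx => lt_trans (hs_pos n) hx.1)).aemeasurable
      measurableSet_Ioc
  have hg_mono : Monotone g := by
    intro i j hij
    refine fun x => Set.indicator_le_indicator_of_subset ?_ (fun y => zero_le) x
    apply Set.Ioc_subset_Ioc_left
    apply div_le_div_of_nonneg_left (le_of_lt hm) (by positivity)
    push_cast; linarith [(Nat.cast_le (α := ℝ)).2 hij]
  have hg_sup : ∀ x, (⨆ n, g n x) = (Set.Ioc (0:ℝ) m).indicator f x := by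
    intro x
    by_cases hx : x ∈ Set.Ioc (0:ℝ) m
    · rw [Set.indicator_of_mem hx]
      apply le_antisymm
      · exact iSup_le fun n => Set.indicator_le' (fun y _ => le_refl _) (fun y _ => zero_le) x
      · obtain ⟨n, hn⟩ := exists_nat_gt (m / x)
        have : s n < x := by
          rw [hsdef, div_lt_iff₀ (by positivity)]
          have hx0 := hx.1
          calc m = (m / x) * x := by field_simp
          _ < n * x := by apply mul_lt_mul_of_pos_right hn hx0
          _ ≤ x * (n + 2) := by nlinarith [hx0]
        have hmem : x ∈ Set.Ioc (s n) m := ⟨this, hx.2⟩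
        refine le_iSup_of_le n (le_of_eq ?_)
        rw [hgdef]
        exact (Set.indicator_of_mem hmem f).symm
    · rw [Set.indicator_of_notMem hx]
      refine le_antisymm (iSup_le fun n => ?_) zero_le
      rw [hgdef]; simp only []
      rw [Set.indicator_of_notMem (fun hmem => hx ⟨lt_trans (hs_pos n) hmem.1, hmem.2⟩)]
  have hsup : (⨆ n, ∫⁻ x, g n x) = ⊤ := by
    rw [← lintegral_iSup' hg_meas (Filter.Eventually.of_forall fun x i j hij => hg_mono hij x)]
    have : (fun x => ⨆ n, g n x) = (Set.Ioc (0:ℝ) m).indicator f := funext hg_sup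
    rw [this, lintegral_indicator measurableSet_Ioc]
    exact hIocm
  obtain ⟨n, hn⟩ : ∃ n, ENNReal.ofReal Real.pi < ∫⁻ x, g n x := by
    by_contra hcon
    push_neg at hcon
    have h1 : (⨆ n, ∫⁻ x, g n x) ≤ ENNReal.ofReal Real.pi := iSup_le hcon
    rw [hsup] at h1
    exact absurd h1 (by simp)
  refine ⟨s n, ⟨hs_pos n, hs_lt n⟩, ?_⟩
  have hInt : IntegrableOn (fun x => 1 / a x) (Set.Ioc (s n) m) := by
    apply (ContinuousOn.integrableOn_compact isCompact_Icc ?_).mono_set Set.Ioc_subset_Icc_self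
    exact continuousOn_const.div
      (ha_cont.mono (fun x hx => lt_of_lt_of_le (hs_pos n) hx.1))
      (fun x hx => (ha_pos x (lt_of_lt_of_le (hs_pos n) hx.1)).ne')
  have heq : ∫⁻ x, g n x = ENNReal.ofReal (∫ x in Set.Ioc (s n) m, 1 / a x) := by
    rw [hgdef]; simp only []
    rw [lintegral_indicator measurableSet_Ioc]
    rw [← ofReal_integral_eq_lintegral_ofReal hInt]
    filter_upwards [ae_restrict_mem measurableSet_Ioc] with x hx
    exact le_of_lt (div_pos one_pos (ha_pos x (lt_trans (hs_pos n) hx.1)))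
  rw [heq] at hn
  have h2 : Real.pi < ∫ x in Set.Ioc (s n) m, 1 / a x := by
    by_contra hcon
    push_neg at hcon
    exact absurd (ENNReal.ofReal_le_ofReal hcon) (not_le.2 hn)
  rw [intervalIntegral.integral_of_le (le_of_lt (hs_lt n))]
  exact h2


variable {E : Type*} [NormedAddCommGroup E] [InnerProductSpace ℝ E]

lemma aux_norm_orth (p q : E) (hp : ‖p‖ = 1) (hq : ‖q‖ = 1) (hpq : ⟪p, q⟫ = 0)
    (x y : ℝ) : ‖x • p + y • q‖ = Real.sqrt (x ^ 2 + y ^ 2) := by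
  have h : ‖x • p + y • q‖ ^ 2 = x ^ 2 + y ^ 2 := by
    rw [norm_add_sq_real, norm_smul, norm_smul, real_inner_smul_left, real_inner_smul_right,
      hpq, hp, hq, Real.norm_eq_abs, Real.norm_eq_abs]
    simp only [mul_one, mul_zero, mul_pow, sq_abs]
    ring
  rw [← h, Real.sqrt_sq (norm_nonneg _)]

lemma aux_exists_q (d : ℕ) (hd : 1 ≤ d) (p ω : EuclideanSpace ℝ (Fin (d + 1)))
    (hp : ‖p‖ = 1) (hω : ‖ω‖ = 1) :
    ∃ q : EuclideanSpace ℝ (Fin (d + 1)), ‖q‖ = 1 ∧ ⟪p, q⟫ = 0 ∧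
      ω = Real.cos (Real.arccos ⟪p, ω⟫) • p + Real.sin (Real.arccos ⟪p, ω⟫) • q := by
  set c : ℝ := ⟪p, ω⟫ with hc
  have hc1 : |c| ≤ 1 := by
    have := abs_real_inner_le_norm p ω
    rwa [hp, hω, one_mul] at this
  have hcos : Real.cos (Real.arccos c) = c :=
    Real.cos_arccos (neg_le_of_abs_le hc1) (le_of_abs_le hc1)
  have hsin : Real.sin (Real.arccos c) = Real.sqrt (1 - c ^ 2) := Real.sin_arccos c
  set w : EuclideanSpace ℝ (Fin (d + 1)) := ω - c • p with hw
  have hpw : ⟪p, w⟫ = 0 := by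
    rw [hw, inner_sub_right, real_inner_smul_right, real_inner_self_eq_norm_sq, hp]
    simp [hc]
  have hwnorm : ‖w‖ = Real.sqrt (1 - c ^ 2) := by
    have h2 : ‖w‖ ^ 2 = 1 - c ^ 2 := by
      rw [hw, norm_sub_sq_real, real_inner_smul_right, norm_smul, hω, hp, real_inner_comm,
        ← hc, Real.norm_eq_abs]
      simp only [mul_one, one_pow, mul_pow, sq_abs]
      ring
    rw [← h2, Real.sqrt_sq (norm_nonneg _)]
  by_cases hw0 : w = 0
  · -- degenerate case: pick any unit vector orthogonal to p
    have hp0 : p ≠ 0 := by intro h; rw [h] at hp; simp at hp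
    have hfr : 0 < Module.finrank ℝ ((ℝ ∙ p)ᗮ : Submodule ℝ (EuclideanSpace ℝ (Fin (d + 1)))) := by
      have h1 : Module.finrank ℝ (ℝ ∙ p : Submodule ℝ (EuclideanSpace ℝ (Fin (d + 1)))) = 1 :=
        finrank_span_singleton hp0
      have h2 := Submodule.finrank_add_finrank_orthogonal
        (K := (ℝ ∙ p : Submodule ℝ (EuclideanSpace ℝ (Fin (d + 1)))))
      rw [h1] at h2
      have h3 : Module.finrank ℝ (EuclideanSpace ℝ (Fin (d + 1))) = d + 1 := by
        simp [finrank_euclideanSpace]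
      omega
    obtain ⟨v, hv0⟩ := Module.finrank_pos_iff_exists_ne_zero.mp hfr
    have hv_mem : (v : EuclideanSpace ℝ (Fin (d + 1))) ∈ (ℝ ∙ p)ᗮ := v.2
    have hvne : (v : EuclideanSpace ℝ (Fin (d + 1))) ≠ 0 := fun h => hv0 (Subtype.ext h)
    set q : EuclideanSpace ℝ (Fin (d + 1)) := ‖(v : EuclideanSpace ℝ (Fin (d + 1)))‖⁻¹ • v
    have hpq : ⟪p, q⟫ = 0 := by
      rw [real_inner_smul_right]
      rw [hv_mem p (Submodule.mem_span_singleton_self p), mul_zero]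
    have hqn : ‖q‖ = 1 := by
      rw [norm_smul, norm_inv, norm_norm, inv_mul_cancel₀ (norm_ne_zero_iff.2 hvne)]
    refine ⟨q, hqn, hpq, ?_⟩
    have hsin0 : Real.sin (Real.arccos c) = 0 := by
      rw [hsin, ← hwnorm, hw0, norm_zero]
    rw [hcos, hsin0, zero_smul, add_zero]
    have : ω - c • p = 0 := hw0
    have := sub_eq_zero.mp this
    exact this
  · refine ⟨‖w‖⁻¹ • w, ?_, ?_, ?_⟩
    · rw [norm_smul, norm_inv, norm_norm, inv_mul_cancel₀ (norm_ne_zero_iff.2 hw0)]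
    · rw [real_inner_smul_right, hpw, mul_zero]
    · rw [hcos, hsin, ← hwnorm, smul_smul, mul_inv_cancel₀ (norm_ne_zero_iff.2 hw0), one_smul, hw]
      abel



end AuxFLRW

/-- A curve `σ : [s,b] → E` is *piecewise C¹ with speed less than `1/a`* if there is a
partition `s = t 0 < t 1 < ⋯ < t n = b` such that on each closed subinterval `σ` has a
continuous derivative whose norm is pointwise `< 1 / a`. -/
def PiecewiseC1SpeedLt {E : Type*} [NormedAddCommGroup E] [NormedSpace ℝ E]
    (a : ℝ → ℝ) (σ : ℝ → E) (s b : ℝ) : Prop :=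
  ∃ n : ℕ, ∃ t : ℕ → ℝ, 0 < n ∧ t 0 = s ∧ t n = b ∧ (∀ i, i < n → t i < t (i + 1)) ∧
    ∀ i, i < n → ∃ σ' : ℝ → E,
      ContinuousOn σ' (Set.Icc (t i) (t (i + 1))) ∧
      ∀ x ∈ Set.Icc (t i) (t (i + 1)),
        HasDerivWithinAt σ (σ' x) (Set.Icc (t i) (t (i + 1))) x ∧ ‖σ' x‖ < 1 / a x

/-- Let `d ≥ 1` and `a : (0,∞) → (0,∞)` continuous with `∫₀¹ dt/a(t) = ∞` (no particle
horizons). Let `γ : (0,1) → S^d ⊆ ℝ^{d+1}` be differentiable with `‖γ'(s)‖ < 1/a(s)`.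
Then for every `s₀ ∈ (0,1)`, every `that > 0` and every `ωhat ∈ S^d` there exist
`s ∈ (0, min s₀ that)` and a continuous, piecewise `C¹` curve `σ : [s, that] → S^d` with
`σ s = γ s`, `σ that = ωhat` and speed `< 1/a` wherever differentiable. -/
theorem flrw_spherical_timelike_future_is_everything
    (d : ℕ) (hd : 1 ≤ d)
    (a : ℝ → ℝ) (ha_pos : ∀ t > (0:ℝ), 0 < a t) (ha_cont : ContinuousOn a (Set.Ioi 0))
    (ha_noPH : ∫⁻ t in Set.Ioc (0:ℝ) 1, ENNReal.ofReal (1 / a t) = ⊤)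
    (γ γ' : ℝ → EuclideanSpace ℝ (Fin (d + 1)))
    (hγ_sph : ∀ s ∈ Set.Ioo (0:ℝ) 1, ‖γ s‖ = 1)
    (hγ_deriv : ∀ s ∈ Set.Ioo (0:ℝ) 1, HasDerivAt γ (γ' s) s)
    (hγ_speed : ∀ s ∈ Set.Ioo (0:ℝ) 1, ‖γ' s‖ < 1 / a s) :
    ∀ s₀ ∈ Set.Ioo (0:ℝ) 1, ∀ that > (0:ℝ),
      ∀ ωhat : EuclideanSpace ℝ (Fin (d + 1)), ‖ωhat‖ = 1 →
        ∃ s ∈ Set.Ioo (0:ℝ) (min s₀ that), ∃ σ : ℝ → EuclideanSpace ℝ (Fin (d + 1)),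
          ContinuousOn σ (Set.Icc s that) ∧
          σ s = γ s ∧ σ that = ωhat ∧
          (∀ τ ∈ Set.Icc s that, ‖σ τ‖ = 1) ∧
          PiecewiseC1SpeedLt a σ s that := by
  intro s₀ hs₀ that hthat ωhat hωhat
  have hm_pos : 0 < min s₀ that := lt_min hs₀.1 hthat
  have hm_le1 : min s₀ that ≤ 1 := le_trans (min_le_left _ _) (le_of_lt hs₀.2)
  obtain ⟨s, hs, hπ⟩ := aux_exists_s a ha_pos ha_cont ha_noPH (min s₀ that) hm_pos hm_le1
  have hs_pos : 0 < s := hs.1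
  have hm_le_that : min s₀ that ≤ that := min_le_right _ _
  have hs_that : s < that := lt_of_lt_of_le hs.2 hm_le_that
  have hs1 : s ∈ Set.Ioo (0:ℝ) 1 := ⟨hs_pos, lt_trans (lt_of_lt_of_le hs.2 (min_le_left _ _)) hs₀.2⟩
  set p := γ s with hpdef
  have hp : ‖p‖ = 1 := hγ_sph s hs1
  -- interval integrability of 1/a on any subinterval of [s, that]
  have hIcc_sub : Set.Icc s that ⊆ Set.Ioi (0:ℝ) := fun x hx => lt_of_lt_of_le hs_pos hx.1
  have hcont_inv : ContinuousOn (fun x => 1 / a x) (Set.Ioi (0:ℝ)) :=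
    continuousOn_const.div ha_cont (fun x hx => (ha_pos x hx).ne')
  have hII : ∀ u v : ℝ, s ≤ u → u ≤ v → v ≤ that →
      IntervalIntegrable (fun x => 1 / a x) volume u v := by
    intro u v hu huv hv
    apply ContinuousOn.intervalIntegrable
    apply hcont_inv.mono
    rw [Set.uIcc_of_le huv]
    intro x hx
    exact lt_of_lt_of_le hs_pos (le_trans hu hx.1)
  set I := ∫ x in s..that, 1 / a x with hIdef
  have hπI : Real.pi < I := by
    have hsplit : I = (∫ x in s..(min s₀ that), 1 / a x) + ∫ x in (min s₀ that)..that, 1 / a x := by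
      rw [hIdef, ← intervalIntegral.integral_add_adjacent_intervals
        (hII s (min s₀ that) le_rfl (le_of_lt hs.2) hm_le_that) (hII (min s₀ that) that (le_of_lt hs.2) hm_le_that le_rfl)]
    have hnn : 0 ≤ ∫ x in (min s₀ that)..that, 1 / a x := by
      apply intervalIntegral.integral_nonneg hm_le_that
      intro x hx
      exact le_of_lt (div_pos one_pos (ha_pos x (lt_of_lt_of_le (lt_trans hs_pos hs.2) hx.1)))
    linarith
  have hI_pos : 0 < I := lt_trans Real.pi_pos hπI
  set L := Real.arccos ⟪p, ωhat⟫ with hLdef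
  have hL_nonneg : 0 ≤ L := Real.arccos_nonneg _
  have hL_le : L ≤ Real.pi := Real.arccos_le_pi _
  set c := L / I with hcdef
  have hc_nonneg : 0 ≤ c := div_nonneg hL_nonneg (le_of_lt hI_pos)
  have hc_lt : c < 1 := (div_lt_one hI_pos).2 (lt_of_le_of_lt hL_le hπI)
  obtain ⟨q, hq, hpq, hωq⟩ := aux_exists_q d hd p ωhat hp hωhat
  set F : ℝ → ℝ := fun τ => ∫ x in s..τ, 1 / a x with hFdef
  set θ : ℝ → ℝ := fun τ => c * F τ with hθdef
  set σ : ℝ → EuclideanSpace ℝ (Fin (d + 1)) :=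
    fun τ => Real.cos (θ τ) • p + Real.sin (θ τ) • q with hσdef
  set σ' : ℝ → EuclideanSpace ℝ (Fin (d + 1)) :=
    fun τ => (-Real.sin (θ τ) * (c * (1 / a τ))) • p + (Real.cos (θ τ) * (c * (1 / a τ))) • q
    with hσ'def
  have hF_deriv : ∀ τ ∈ Set.Icc s that, HasDerivAt F (1 / a τ) τ := by
    intro τ hτ
    have hτ0 : (0:ℝ) < τ := hIcc_sub hτ
    refine intervalIntegral.integral_hasDerivAt_right (hII s τ le_rfl hτ.1 hτ.2) ?_ ?_
    · exact ContinuousOn.stronglyMeasurableAtFilter isOpen_Ioi hcont_inv τ hτ0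
    · exact hcont_inv.continuousAt (isOpen_Ioi.mem_nhds hτ0)
  have hθ_deriv : ∀ τ ∈ Set.Icc s that, HasDerivAt θ (c * (1 / a τ)) τ :=
    fun τ hτ => (hF_deriv τ hτ).const_mul c
  have hσ_deriv : ∀ τ ∈ Set.Icc s that, HasDerivAt σ (σ' τ) τ := by
    intro τ hτ
    have h1 : HasDerivAt (fun x => Real.cos (θ x)) (-Real.sin (θ τ) * (c * (1 / a τ))) τ :=
      (hθ_deriv τ hτ).cos
    have h2 : HasDerivAt (fun x => Real.sin (θ x)) (Real.cos (θ τ) * (c * (1 / a τ))) τ :=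
      (hθ_deriv τ hτ).sin
    exact (h1.smul_const p).add (h2.smul_const q)
  have hθ_cont : ContinuousOn θ (Set.Icc s that) :=
    fun τ hτ => ((hθ_deriv τ hτ).continuousAt).continuousWithinAt
  have hσ'_cont : ContinuousOn σ' (Set.Icc s that) := by
    apply ContinuousOn.add
    · apply ContinuousOn.smul (f := fun τ => -Real.sin (θ τ) * (c * (1 / a τ))) (g := fun _ => p) _ continuousOn_const
      apply ContinuousOn.mul
      · exact (Real.continuous_sin.comp_continuousOn hθ_cont).neg
      · exact continuousOn_const.mul (hcont_inv.mono hIcc_sub)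
    · apply ContinuousOn.smul (f := fun τ => Real.cos (θ τ) * (c * (1 / a τ))) (g := fun _ => q) _ continuousOn_const
      apply ContinuousOn.mul
      · exact Real.continuous_cos.comp_continuousOn hθ_cont
      · exact continuousOn_const.mul (hcont_inv.mono hIcc_sub)
  have hσ_cont : ContinuousOn σ (Set.Icc s that) :=
    fun τ hτ => ((hσ_deriv τ hτ).continuousAt).continuousWithinAt
  have hθs : θ s = 0 := by
    rw [hθdef]; simp only [hFdef]
    rw [intervalIntegral.integral_same, mul_zero]
  have hθthat : θ that = L := by
    rw [hθdef]; simp only [hFdef]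
    rw [hcdef, ← hIdef]
    field_simp
  refine ⟨s, hs, σ, hσ_cont, ?_, ?_, ?_, ?_⟩
  · rw [hσdef]; simp only []
    rw [hθs]
    simp [hpdef]
  · rw [hσdef]; simp only []
    rw [hθthat, hωq]
  · intro τ hτ
    rw [hσdef]; simp only []
    rw [aux_norm_orth p q hp hq hpq]
    rw [Real.cos_sq_add_sin_sq, Real.sqrt_one]
  · refine ⟨1, fun i => if i = 0 then s else that, one_pos, by simp, by simp, ?_, ?_⟩
    · intro i hi
      have hi0 : i = 0 := Nat.lt_one_iff.mp hi
      subst hi0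
      simpa using hs_that
    · intro i hi
      have hi0 : i = 0 := Nat.lt_one_iff.mp hi
      subst hi0
      simp only [if_pos rfl, if_neg (Nat.one_ne_zero), Nat.zero_add]
      refine ⟨σ', hσ'_cont, ?_⟩
      intro x hx
      refine ⟨(hσ_deriv x hx).hasDerivWithinAt, ?_⟩
      rw [hσ'def]; simp only []
      rw [aux_norm_orth p q hp hq hpq]
      have hax : 0 < a x := ha_pos x (hIcc_sub hx)
      have : (-Real.sin (θ x) * (c * (1 / a x))) ^ 2 + (Real.cos (θ x) * (c * (1 / a x))) ^ 2
          = (c * (1 / a x)) ^ 2 := by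
        have h := Real.sin_sq_add_cos_sq (θ x)
        linear_combination (c * (1 / a x)) ^ 2 * h
      rw [this, Real.sqrt_sq (by positivity)]
      calc c * (1 / a x) < 1 * (1 / a x) := by
            apply mul_lt_mul_of_pos_right hc_lt (by positivity)
        _ = 1 / a x := one_mul _
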